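/- Let α, β ≥ 1, let J = f + g be a Generalised Min-Cut objective on V with optimum value λ, 0 < λ < ∞, f superadditive and g posimodular with g(∅)=0. Let X be an α-optimal solution (J(X) ≤ αλ) and Y an optimal Min-Cut solution for g. If g(Y) < λ/β, then J(X\Y) + J(X∩Y) < (α + 2/β)·λ. -/

import Mathlib

variable {V : Type*} [Fintype V] [DecidableEq V]

/-- A solution: a nonempty proper subset of the vertex set. -/
def IsCutSolution (X : Finset V) : Prop := X ≠ ∅ ∧ X ≠ Finset.univ

/-- Let `J = f + g` with `f` superadditive and `g` posimodular, and let `λ` be the optimum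
of `J` over solutions, with `0 < λ < ∞`. If `X` is an `α`-optimal solution to `J` and `Y`
is an optimal Min-Cut solution for `g` with `g(Y) < λ/β`, then
`J(X\Y) + J(X∩Y) < (α + 2/β)·λ` (stated multiplied through by `β`). -/
theorem stmt10 (f : Finset V → WithTop NNRat) (hf0 : f ∅ = 0)
    (hfsup : ∀ A B : Finset V, Disjoint A B → f A + f B ≤ f (A ∪ B))
    (g : Finset V → NNRat) (hg0 : g ∅ = 0)
    (hgpos : ∀ A B : Finset V, g (A \ B) + g (B \ A) ≤ g A + g B)
    (α β : NNRat) (hα : 1 ≤ α) (hβ : 1 ≤ β)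
    (lam : WithTop NNRat) (hl0 : 0 < lam) (hlt : lam < ⊤)
    (hmin : ∀ Z : Finset V, IsCutSolution Z → lam ≤ f Z + (g Z : WithTop NNRat))
    (X : Finset V) (hX : IsCutSolution X)
    (hXa : f X + (g X : WithTop NNRat) ≤ (α : WithTop NNRat) * lam)
    (Y : Finset V) (hYsol : IsCutSolution Y)
    (hYopt : ∀ Z : Finset V, IsCutSolution Z → g Y ≤ g Z)
    (hgY : (β : WithTop NNRat) * (g Y : WithTop NNRat) < lam) :
    (β : WithTop NNRat) *
        ((f (X \ Y) + (g (X \ Y) : WithTop NNRat)) + (f (X ∩ Y) + (g (X ∩ Y) : WithTop NNRat)))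
      < ((α * β : NNRat) : WithTop NNRat) * lam + ((2 : NNRat) : WithTop NNRat) * lam := by
  obtain ⟨l, rfl⟩ := WithTop.ne_top_iff_exists.mp hlt.ne
  -- superadditivity of f
  have hdisj : Disjoint (X \ Y) (X ∩ Y) :=
    Finset.sdiff_disjoint.mono_right Finset.inter_subset_right
  have hf : f (X \ Y) + f (X ∩ Y) ≤ f X := by
    have h := hfsup (X \ Y) (X ∩ Y) hdisj
    rwa [Finset.sdiff_union_inter] at h
  -- posimodularity of g
  have hg1 : g (X \ Y) + g (Y \ X) ≤ g X + g Y := hgpos X Y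
  have hg2 : g (X ∩ Y) ≤ g Y + g (Y \ X) := by
    have h := hgpos Y (Y \ X)
    rw [sdiff_sdiff_right_self, Finset.sdiff_eq_empty_iff_subset.mpr
      (Finset.sdiff_subset), hg0, add_zero, Finset.inf_eq_inter, Finset.inter_comm] at h
    exact h
  have hgsum : g (X \ Y) + g (X ∩ Y) ≤ g X + (g Y + g Y) :=
    calc g (X \ Y) + g (X ∩ Y) ≤ g (X \ Y) + (g Y + g (Y \ X)) := add_le_add_right hg2 _
      _ = (g (X \ Y) + g (Y \ X)) + g Y := by ring
      _ ≤ (g X + g Y) + g Y := add_le_add_left hg1 _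
      _ = g X + (g Y + g Y) := by ring
  have hgsumW : (g (X \ Y) : WithTop NNRat) + (g (X ∩ Y) : WithTop NNRat)
      ≤ (g X : WithTop NNRat) + ((g Y : WithTop NNRat) + (g Y : WithTop NNRat)) := by
    exact_mod_cast hgsum
  -- combine
  have hbound : (f (X \ Y) + (g (X \ Y) : WithTop NNRat)) + (f (X ∩ Y) + (g (X ∩ Y) : WithTop NNRat))
      ≤ (α : WithTop NNRat) * (l : WithTop NNRat) + ((g Y : WithTop NNRat) + (g Y : WithTop NNRat)) := by
    calc (f (X \ Y) + (g (X \ Y) : WithTop NNRat)) + (f (X ∩ Y) + (g (X ∩ Y) : WithTop NNRat))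
        = (f (X \ Y) + f (X ∩ Y)) + ((g (X \ Y) : WithTop NNRat) + (g (X ∩ Y) : WithTop NNRat)) := by
          ring
      _ ≤ f X + ((g X : WithTop NNRat) + ((g Y : WithTop NNRat) + (g Y : WithTop NNRat))) :=
          add_le_add hf hgsumW
      _ = (f X + (g X : WithTop NNRat)) + ((g Y : WithTop NNRat) + (g Y : WithTop NNRat)) := by ring
      _ ≤ (α : WithTop NNRat) * (l : WithTop NNRat) + ((g Y : WithTop NNRat) + (g Y : WithTop NNRat)) :=
          add_le_add_left hXa _
  have hmul : (β : WithTop NNRat) *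
      ((f (X \ Y) + (g (X \ Y) : WithTop NNRat)) + (f (X ∩ Y) + (g (X ∩ Y) : WithTop NNRat)))
      ≤ ((α * β : NNRat) : WithTop NNRat) * (l : WithTop NNRat)
        + ((β : WithTop NNRat) * (g Y : WithTop NNRat) + (β : WithTop NNRat) * (g Y : WithTop NNRat)) := by
    calc (β : WithTop NNRat) * _ ≤ (β : WithTop NNRat) *
          ((α : WithTop NNRat) * (l : WithTop NNRat) + ((g Y : WithTop NNRat) + (g Y : WithTop NNRat))) :=
        mul_le_mul_right hbound _
      _ = ((α * β : NNRat) : WithTop NNRat) * (l : WithTop NNRat)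
        + ((β : WithTop NNRat) * (g Y : WithTop NNRat) + (β : WithTop NNRat) * (g Y : WithTop NNRat)) := by
        push_cast; ring
  refine lt_of_le_of_lt hmul ?_
  have hne : ((α * β : NNRat) : WithTop NNRat) * (l : WithTop NNRat) ≠ ⊤ :=
    WithTop.mul_ne_top (WithTop.coe_ne_top) (WithTop.coe_ne_top)
  have h2 : (β : WithTop NNRat) * (g Y : WithTop NNRat) + (β : WithTop NNRat) * (g Y : WithTop NNRat)
      < ((2 : NNRat) : WithTop NNRat) * (l : WithTop NNRat) := by
    have : (β * g Y : NNRat) < l := by exact_mod_cast hgY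
    have h2' : (β * g Y + β * g Y : NNRat) < 2 * l := by
      calc (β * g Y + β * g Y : NNRat) < l + l := add_lt_add this this
        _ = 2 * l := by ring
    exact_mod_cast h2'
  exact WithTop.add_lt_add_left hne h2
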